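/- The weak combinatorics of the arrangement 𝒜(31,2) is (31; t₂ = 54, t₃ = 42, t₄ = 21, t₅ = 6, t₆ = 1, t₈ = 3), and t_k = 0 for every other k ≥ 2; that is, the number of points of ℙ²(ℝ) at which exactly k of the 31 forms of 𝒜(31,2) vanish equals 54 for k = 2, 42 for k = 3, 21 for k = 4, 6 for k = 5, 1 for k = 6, 3 for k = 8, and 0 for all other k ≥ 2. -/

import Mathlib

open MvPolynomial

noncomputable section

/-- The polynomial ring `S = ℝ[x,y,z]`. -/
abbrev S : Type := MvPolynomial (Fin 3) ℝ

/-- `e = √3` as a constant polynomial. -/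
def e : S := C (Real.sqrt 3)
def x : S := X 0
def y : S := X 1
def z : S := X 2

/-- The linear form `ℓ` vanishes at the point of `ℙ²(ℝ)` represented by any
nonzero vector mapping to `P`. -/
def Vanish (ℓ : S) (P : Projectivization ℝ (Fin 3 → ℝ)) : Prop :=
  ∀ (v : Fin 3 → ℝ) (hv : v ≠ 0), Projectivization.mk ℝ v hv = P → eval v ℓ = 0

/-- `tk A k` is the number of points of `ℙ²(ℝ)` at which exactly `k` of the
forms of `A` vanish. -/
def tk (A : Finset S) (k : ℕ) : ℕ :=
  {P : Projectivization ℝ (Fin 3 → ℝ) |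
    {ℓ : S | ℓ ∈ A ∧ Vanish ℓ P}.ncard = k}.ncard

/-- The arrangement 𝒜(31,2). -/
def A312 : Finset S :=
  { (z),
    (y),
    (x),
    (e*x+y),
    (e*x-y),
    (x+e*y),
    (x-e*y),
    (2*x+e*z),
    (2*x-e*z),
    (x+e*z),
    (x-e*z),
    (x+e*y+e*z),
    (x+e*y-e*z),
    (x-e*y+e*z),
    (x-e*y-e*z),
    (x+e*y+2*e*z),
    (x+e*y-2*e*z),
    (x-e*y+2*e*z),
    (x-e*y-2*e*z),
    (e*x+y+z),
    (e*x+y-z),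
    (e*x-y+z),
    (e*x-y-z),
    (2*y+z),
    (2*y-z),
    (x+e*y+3*e*z),
    (x+e*y-3*e*z),
    (x-e*y+3*e*z),
    (x-e*y-3*e*z),
    (2*x+3*e*z),
    (2*x-3*e*z) }


set_option maxRecDepth 100000
set_option maxHeartbeats 4000000

section Arrangement

abbrev K : Type := ℤ × ℤ
abbrev KV : Type := K × K × K
def kadd (u v : K) : K := (u.1+v.1, u.2+v.2)
def ksub (u v : K) : K := (u.1-v.1, u.2-v.2)
def kmul (u v : K) : K := (u.1*v.1+3*u.2*v.2, u.1*v.2+u.2*v.1)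
def kdot (a b : KV) : K := kadd (kmul a.1 b.1) (kadd (kmul a.2.1 b.2.1) (kmul a.2.2 b.2.2))
def kcross (a b : KV) : KV :=
  (ksub (kmul a.2.1 b.2.2) (kmul a.2.2 b.2.1),
   ksub (kmul a.2.2 b.1) (kmul a.1 b.2.2),
   ksub (kmul a.1 b.2.1) (kmul a.2.1 b.1))
def kv0 : KV := ((0,0),(0,0),(0,0))

def phi (u : K) : ℝ := (u.1 : ℝ) + (u.2 : ℝ) * Real.sqrt 3
def phiv (a : KV) : Fin 3 → ℝ := ![phi a.1, phi a.2.1, phi a.2.2]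

lemma sqrt3_sq : Real.sqrt 3 * Real.sqrt 3 = 3 := Real.mul_self_sqrt (by norm_num)

lemma phi_inj : Function.Injective phi := by
  rintro ⟨a,b⟩ ⟨c,d⟩ h
  simp only [phi] at h
  by_cases hbd : b = d
  · subst hbd; simp at h; norm_cast at h; simp [h]
  · exfalso
    have hb : ((b : ℝ) - d) ≠ 0 := by
      intro hc; apply hbd; norm_cast at hc; omega
    have hs : Real.sqrt 3 = ((c - a : ℤ) : ℝ) / ((b - d : ℤ) : ℝ) := by
      push_cast; field_simp; linarith
    have h3 : Irrational (Real.sqrt 3) := by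
      simpa using Nat.prime_three.irrational_sqrt
    apply h3
    refine ⟨((c - a : ℤ) : ℚ) / ((b - d : ℤ) : ℚ), ?_⟩
    rw [hs]; push_cast; ring
lemma phi_zero : phi (0,0) = 0 := by simp [phi]
lemma phi_add (u v : K) : phi (kadd u v) = phi u + phi v := by
  simp [phi, kadd]; push_cast; ring
lemma phi_sub (u v : K) : phi (ksub u v) = phi u - phi v := by
  simp [phi, ksub]; push_cast; ring
lemma phi_mul (u v : K) : phi (kmul u v) = phi u * phi v := by
  simp only [phi, kmul]; push_cast
  linear_combination (-(u.2 : ℝ) * v.2) * sqrt3_sq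

lemma phiv_inj : Function.Injective phiv := by
  rintro a b h
  have h0 := congrFun h 0
  have h1 := congrFun h 1
  have h2 := congrFun h 2
  simp [phiv] at h0 h1 h2
  exact Prod.ext (phi_inj h0) (Prod.ext (phi_inj h1) (phi_inj h2))
lemma phiv_zero : phiv kv0 = 0 := by
  funext i; fin_cases i <;> simp [phiv, kv0, phi]
lemma phiv_ne_zero {p : KV} (h : p ≠ kv0) : phiv p ≠ 0 := by
  intro hc; exact h (phiv_inj (by rw [hc, phiv_zero]))

def dotR (a w : Fin 3 → ℝ) : ℝ := a 0 * w 0 + a 1 * w 1 + a 2 * w 2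
def crossR (a b : Fin 3 → ℝ) : Fin 3 → ℝ :=
  ![a 1 * b 2 - a 2 * b 1, a 2 * b 0 - a 0 * b 2, a 0 * b 1 - a 1 * b 0]

lemma dotR_phi (a b : KV) : dotR (phiv a) (phiv b) = phi (kdot a b) := by
  simp [dotR, phiv, kdot, phi_add, phi_mul]; ring
lemma crossR_phi (a b : KV) : crossR (phiv a) (phiv b) = phiv (kcross a b) := by
  funext i; fin_cases i <;>
    simp [crossR, phiv, kcross, phi_sub, phi_mul]

lemma cross_smul_self (t : ℝ) (v : Fin 3 → ℝ) : crossR (t • v) v = 0 := by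
  funext i; fin_cases i <;> simp [crossR] <;> ring

lemma prop_of_cross_zero {w c : Fin 3 → ℝ} (hc : c ≠ 0) (h : crossR w c = 0) :
    ∃ t : ℝ, w = t • c := by
  have h0 := congrFun h 0
  have h1 := congrFun h 1
  have h2 := congrFun h 2
  simp [crossR, sub_eq_zero] at h0 h1 h2
  have hex : c 0 ≠ 0 ∨ c 1 ≠ 0 ∨ c 2 ≠ 0 := by
    by_contra hno
    push_neg at hno
    apply hc; funext i; fin_cases i <;> simp [hno.1, hno.2.1, hno.2.2]
  rcases hex with h' | h' | h'
  · refine ⟨w 0 / c 0, ?_⟩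
    funext i; fin_cases i <;> simp <;> field_simp
    · linarith [h2]
    · linarith [h1]
  · refine ⟨w 1 / c 1, ?_⟩
    funext i; fin_cases i <;> simp <;> field_simp
    · linarith [h2]
    · linarith [h0]
  · refine ⟨w 2 / c 2, ?_⟩
    funext i; fin_cases i <;> simp <;> field_simp
    · linarith [h1]
    · linarith [h0]

lemma triple_cross {a b w : Fin 3 → ℝ} (h1 : dotR a w = 0) (h2 : dotR b w = 0) :
    crossR w (crossR a b) = 0 := by
  simp only [dotR] at h1 h2
  funext i
  fin_cases i
  · simp [crossR]; linear_combination a 0 * h2 - b 0 * h1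
  · simp [crossR]; linear_combination a 1 * h2 - b 1 * h1
  · simp [crossR]; linear_combination a 2 * h2 - b 2 * h1

def lin (a : Fin 3 → ℝ) : S := C (a 0) * x + C (a 1) * y + C (a 2) * z
def f (v : KV) : S := lin (phiv v)

lemma lin_eval (a w : Fin 3 → ℝ) : eval w (lin a) = dotR a w := by
  simp [lin, dotR, x, y, z]

lemma lin_inj : Function.Injective lin := by
  intro a b h
  have h0 := congrArg (eval ![1,0,0]) h
  have h1 := congrArg (eval ![0,1,0]) h
  have h2 := congrArg (eval ![0,0,1]) h
  simp [lin_eval, dotR] at h0 h1 h2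
  funext i; fin_cases i <;> assumption

lemma f_inj : Function.Injective f := fun _ _ h => phiv_inj (lin_inj h)

lemma vanish_iff (a : Fin 3 → ℝ) (w : Fin 3 → ℝ) (hw : w ≠ 0) :
    Vanish (lin a) (Projectivization.mk ℝ w hw) ↔ dotR a w = 0 := by
  constructor
  · intro h
    have := h w hw rfl
    rwa [lin_eval] at this
  · intro h v hv hmk
    rw [Projectivization.mk_eq_mk_iff] at hmk
    obtain ⟨u, rfl⟩ := hmk
    rw [lin_eval]
    have hd : dotR a ((u : ℝ) • w) = (u : ℝ) * dotR a w := by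
      simp [dotR]; ring
    rw [Units.smul_def, hd, h, mul_zero]

def Ldat : List KV := [((0,0),(0,0),(1,0)), ((0,0),(1,0),(0,0)), ((1,0),(0,0),(0,0)), ((0,1),(1,0),(0,0)), ((0,1),(-1,0),(0,0)), ((1,0),(0,1),(0,0)), ((1,0),(0,-1),(0,0)), ((2,0),(0,0),(0,1)), ((2,0),(0,0),(0,-1)), ((1,0),(0,0),(0,1)), ((1,0),(0,0),(0,-1)), ((1,0),(0,1),(0,1)), ((1,0),(0,1),(0,-1)), ((1,0),(0,-1),(0,1)), ((1,0),(0,-1),(0,-1)), ((1,0),(0,1),(0,2)), ((1,0),(0,1),(0,-2)), ((1,0),(0,-1),(0,2)), ((1,0),(0,-1),(0,-2)), ((0,1),(1,0),(1,0)), ((0,1),(1,0),(-1,0)), ((0,1),(-1,0),(1,0)), ((0,1),(-1,0),(-1,0)), ((0,0),(2,0),(1,0)), ((0,0),(2,0),(-1,0)), ((1,0),(0,1),(0,3)), ((1,0),(0,1),(0,-3)), ((1,0),(0,-1),(0,3)), ((1,0),(0,-1),(0,-3)), ((2,0),(0,0),(0,3)), ((2,0),(0,0),(0,-3))]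

def Pts : List KV := [((1,0),(0,0),(0,0)), ((0,0),(1,0),(0,0)), ((1,0),(0,-1),(0,0)), ((1,0),(0,1),(0,0)), ((3,0),(0,-1),(0,0)), ((3,0),(0,1),(0,0)), ((0,0),(0,0),(1,0)), ((3,0),(0,0),(0,-2)), ((3,0),(0,0),(0,2)), ((3,0),(0,0),(0,-1)), ((3,0),(0,0),(0,1)), ((6,0),(0,0),(0,-1)), ((6,0),(0,0),(0,1)), ((1,0),(0,0),(0,-1)), ((1,0),(0,0),(0,1)), ((9,0),(0,0),(0,-1)), ((9,0),(0,0),(0,1)), ((9,0),(0,0),(0,-2)), ((9,0),(0,0),(0,2)), ((0,0),(1,0),(-1,0)), ((0,0),(1,0),(1,0)), ((0,0),(2,0),(-1,0)), ((0,0),(2,0),(1,0)), ((0,0),(1,0),(-2,0)), ((0,0),(1,0),(2,0)), ((0,0),(3,0),(-1,0)), ((0,0),(3,0),(1,0)), ((3,0),(0,-3),(0,-2)), ((3,0),(0,-3),(0,2)), ((3,0),(0,-3),(0,-1)), ((3,0),(0,-3),(0,1)), ((3,0),(0,-3),(0,-4)), ((3,0),(0,-3),(0,4)), ((1,0),(0,-1),(0,-2)),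 ((1,0),(0,-1),(0,2)), ((9,0),(0,-9),(0,2)), ((9,0),(0,-9),(0,-2)), ((9,0),(0,-9),(0,-4)), ((9,0),(0,-9),(0,4)), ((3,0),(0,3),(0,-2)), ((3,0),(0,3),(0,2)), ((3,0),(0,3),(0,-1)), ((3,0),(0,3),(0,1)), ((3,0),(0,3),(0,-4)), ((3,0),(0,3),(0,4)), ((1,0),(0,1),(0,-2)), ((1,0),(0,1),(0,2)), ((9,0),(0,9),(0,-4)), ((9,0),(0,9),(0,4)), ((9,0),(0,9),(0,2)), ((9,0),(0,9),(0,-2)), ((3,0),(0,-1),(0,-2)), ((3,0),(0,-1),(0,2)), ((3,0),(0,-1),(0,-1)), ((3,0),(0,-1),(0,1)), ((3,0),(0,-1),(0,-4)), ((3,0),(0,-1),(0,4)), ((9,0),(0,-3),(0,-2)), ((9,0),(0,-3),(0,2)), ((3,0),(0,1),(0,-2)), ((3,0),(0,1),(0,2)), ((3,0),(0,1),(0,-1)), ((3,0),(0,1),(0,1)), ((3,0),(0,1),(0,-4)), ((3,0),(0,1),(0,4)), ((9,0),(0,3),(0,-2)), ((9,0),(0,3),(0,2)), ((3,0),(0,-5),(0,-2)),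 ((3,0),(0,5),(0,-2)), ((3,0),(0,-7),(0,-2)), ((3,0),(0,7),(0,-2)), ((3,0),(0,-5),(0,2)), ((3,0),(0,5),(0,2)), ((3,0),(0,-7),(0,2)), ((3,0),(0,7),(0,2)), ((3,0),(0,-2),(0,-1)), ((3,0),(0,2),(0,-1)), ((3,0),(0,-4),(0,-1)), ((3,0),(0,4),(0,-1)), ((6,0),(0,1),(0,-2)), ((6,0),(0,-1),(0,-2)), ((3,0),(0,-2),(0,1)), ((3,0),(0,2),(0,1)), ((3,0),(0,-4),(0,1)), ((3,0),(0,4),(0,1)), ((6,0),(0,-1),(0,2)), ((6,0),(0,1),(0,2)), ((9,0),(0,-1),(0,-2)), ((6,0),(0,-1),(0,-1)), ((9,0),(0,-5),(0,2)), ((9,0),(0,-1),(0,2)), ((6,0),(0,-1),(0,1)), ((9,0),(0,-5),(0,-2)), ((9,0),(0,1),(0,-2)), ((6,0),(0,1),(0,-1)), ((9,0),(0,5),(0,2)), ((9,0),(0,1),(0,2)), ((6,0),(0,1),(0,1)), ((9,0),(0,5),(0,-2)), ((9,0),(0,-7),(0,2)), ((9,0),(0,5),(0,-4)), ((3,0),(0,7),(0,-4)),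 ((15,0),(0,-1),(0,-2)), ((9,0),(0,-7),(0,-2)), ((3,0),(0,7),(0,4)), ((9,0),(0,5),(0,4)), ((15,0),(0,-1),(0,2)), ((9,0),(0,-5),(0,-4)), ((3,0),(0,-7),(0,-4)), ((9,0),(0,7),(0,2)), ((15,0),(0,1),(0,-2)), ((3,0),(0,-7),(0,4)), ((9,0),(0,-5),(0,4)), ((9,0),(0,7),(0,-2)), ((15,0),(0,1),(0,2)), ((6,0),(0,-5),(0,-1)), ((9,0),(0,-11),(0,2)), ((6,0),(0,-5),(0,1)), ((9,0),(0,-11),(0,-2)), ((6,0),(0,5),(0,-1)), ((9,0),(0,11),(0,2)), ((6,0),(0,5),(0,1)), ((9,0),(0,11),(0,-2)), ((21,0),(0,-1),(0,2)), ((21,0),(0,1),(0,-2)), ((21,0),(0,-1),(0,-2)), ((21,0),(0,1),(0,2))]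

def tbl : List (List Nat) := [[0,1,2,3,4,5,1,1,1,1,4,4,5,5,4,4,5,5,2,2,3,3,0,0,4,4,5,5,1,1], [6,6,6,6,6,7,8,9,10,9,10,9,10,11,12,11,12,13,14,13,14,0,0,15,16,15,16,17,18], [6,6,6,6,1,1,1,1,19,20,20,19,21,22,22,21,19,20,20,19,23,24,25,26,26,25,1,1], [6,6,6,27,28,29,30,28,27,31,32,30,29,27,28,2,2,33,34,34,33,35,36,37,38,36,35], [6,6,39,40,41,42,43,44,40,39,39,40,42,41,45,46,3,3,45,46,47,48,49,50,50,49], [6,51,52,53,54,4,4,51,52,4,4,53,54,51,52,55,56,52,51,4,4,57,58,57,58], [59,60,61,62,59,60,5,5,61,62,5,5,63,64,59,60,59,60,65,66,5,5,65,66], [1,1,1,59,27,51,39,39,67,27,68,51,67,59,68,59,51,68,69,67,70,1,1], [1,1,28,60,40,52,71,40,72,28,71,52,72,60,52,60,73,72,74,71,1,1], [1,9,75,9,76,61,29,53,41,75,77,76,78,79,80,76,77,75,78,1,1], [81,10,82,10,30,62,42,54,83,81,84,82,85,86,83,82,84,81,1,1], [4,9,19,4,4,87,28,19,81,59,19,59,87,4,4,88,81,87,89],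 [20,10,4,4,27,90,75,20,20,60,90,60,4,4,75,91,92,90], [5,93,40,5,5,51,20,20,82,93,51,94,82,5,5,93,95], [39,96,5,5,19,52,76,19,52,96,76,97,5,5,98,96], [4,11,21,71,99,100,101,93,102,4,4,102,71,93,99], [22,12,103,67,104,105,106,96,4,4,67,106,103,96], [5,107,108,72,109,110,87,110,72,5,5,87,109], [111,112,113,68,90,114,68,114,5,5,113,90], [2,13,19,45,51,83,115,75,71,103,116], [20,14,52,46,117,77,67,81,118,99], [3,59,33,76,72,84,119,113,120], [34,60,68,82,121,78,122,109], [0,110,123,124,106,93,90], [125,114,102,126,87,96], [4,15,25,65,35], [26,16,36,66], [5,57,49], [50,58], [1], []]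


def mK (p : KV) : ℕ := (Ldat.toFinset.filter (fun v => kdot v p = (0,0))).card

lemma dec1 : Ldat.toFinset.card = 31 := by decide
lemma dec2 : ∀ i ∈ List.range 31, ∀ j ∈ List.range 31, i < j →
    kcross (Ldat.getD i kv0) (Ldat.getD j kv0) ≠ kv0 ∧
    (tbl.getD i []).getD (j-i-1) 0 < Pts.length ∧
    kcross (kcross (Ldat.getD i kv0) (Ldat.getD j kv0))
      (Pts.getD ((tbl.getD i []).getD (j-i-1) 0) kv0) = kv0 := by decide
lemma dec3 : ∀ p ∈ Pts, p ≠ kv0 := by decide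
lemma dec4 : ∀ p ∈ Pts, ∀ q ∈ Pts, p ≠ q → kcross p q ≠ kv0 := by decide
lemma dec5 : ∀ p ∈ Pts, mK p = 2 ∨ mK p = 3 ∨ mK p = 4 ∨ mK p = 5 ∨ mK p = 6 ∨ mK p = 8 := by
  decide
lemma decc2 : (Pts.toFinset.filter (fun p => mK p = 2)).card = 54 := by decide
lemma decc3 : (Pts.toFinset.filter (fun p => mK p = 3)).card = 42 := by decide
lemma decc4 : (Pts.toFinset.filter (fun p => mK p = 4)).card = 21 := by decide
lemma decc5 : (Pts.toFinset.filter (fun p => mK p = 5)).card = 6 := by decide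
lemma decc6 : (Pts.toFinset.filter (fun p => mK p = 6)).card = 1 := by decide
lemma decc8 : (Pts.toFinset.filter (fun p => mK p = 8)).card = 3 := by decide

lemma hf0 : f (((0:ℤ),(0:ℤ)),((0:ℤ),(0:ℤ)),((1:ℤ),(0:ℤ))) = z := by
  simp [f, lin, phiv, phi, e, map_ofNat]; try ring
lemma hf1 : f (((0:ℤ),(0:ℤ)),((1:ℤ),(0:ℤ)),((0:ℤ),(0:ℤ))) = y := by
  simp [f, lin, phiv, phi, e, map_ofNat]; try ring
lemma hf2 : f (((1:ℤ),(0:ℤ)),((0:ℤ),(0:ℤ)),((0:ℤ),(0:ℤ))) = x := by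
  simp [f, lin, phiv, phi, e, map_ofNat]; try ring
lemma hf3 : f (((0:ℤ),(1:ℤ)),((1:ℤ),(0:ℤ)),((0:ℤ),(0:ℤ))) = e*x+y := by
  simp [f, lin, phiv, phi, e, map_ofNat]; try ring
lemma hf4 : f (((0:ℤ),(1:ℤ)),((-1:ℤ),(0:ℤ)),((0:ℤ),(0:ℤ))) = e*x-y := by
  simp [f, lin, phiv, phi, e, map_ofNat]; try ring
lemma hf5 : f (((1:ℤ),(0:ℤ)),((0:ℤ),(1:ℤ)),((0:ℤ),(0:ℤ))) = x+e*y := by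
  simp [f, lin, phiv, phi, e, map_ofNat]; try ring
lemma hf6 : f (((1:ℤ),(0:ℤ)),((0:ℤ),(-1:ℤ)),((0:ℤ),(0:ℤ))) = x-e*y := by
  simp [f, lin, phiv, phi, e, map_ofNat]; try ring
lemma hf7 : f (((2:ℤ),(0:ℤ)),((0:ℤ),(0:ℤ)),((0:ℤ),(1:ℤ))) = 2*x+e*z := by
  simp [f, lin, phiv, phi, e, map_ofNat]; try ring
lemma hf8 : f (((2:ℤ),(0:ℤ)),((0:ℤ),(0:ℤ)),((0:ℤ),(-1:ℤ))) = 2*x-e*z := by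
  simp [f, lin, phiv, phi, e, map_ofNat]; try ring
lemma hf9 : f (((1:ℤ),(0:ℤ)),((0:ℤ),(0:ℤ)),((0:ℤ),(1:ℤ))) = x+e*z := by
  simp [f, lin, phiv, phi, e, map_ofNat]; try ring
lemma hf10 : f (((1:ℤ),(0:ℤ)),((0:ℤ),(0:ℤ)),((0:ℤ),(-1:ℤ))) = x-e*z := by
  simp [f, lin, phiv, phi, e, map_ofNat]; try ring
lemma hf11 : f (((1:ℤ),(0:ℤ)),((0:ℤ),(1:ℤ)),((0:ℤ),(1:ℤ))) = x+e*y+e*z := by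
  simp [f, lin, phiv, phi, e, map_ofNat]; try ring
lemma hf12 : f (((1:ℤ),(0:ℤ)),((0:ℤ),(1:ℤ)),((0:ℤ),(-1:ℤ))) = x+e*y-e*z := by
  simp [f, lin, phiv, phi, e, map_ofNat]; try ring
lemma hf13 : f (((1:ℤ),(0:ℤ)),((0:ℤ),(-1:ℤ)),((0:ℤ),(1:ℤ))) = x-e*y+e*z := by
  simp [f, lin, phiv, phi, e, map_ofNat]; try ring
lemma hf14 : f (((1:ℤ),(0:ℤ)),((0:ℤ),(-1:ℤ)),((0:ℤ),(-1:ℤ))) = x-e*y-e*z := by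
  simp [f, lin, phiv, phi, e, map_ofNat]; try ring
lemma hf15 : f (((1:ℤ),(0:ℤ)),((0:ℤ),(1:ℤ)),((0:ℤ),(2:ℤ))) = x+e*y+2*e*z := by
  simp [f, lin, phiv, phi, e, map_ofNat]; try ring
lemma hf16 : f (((1:ℤ),(0:ℤ)),((0:ℤ),(1:ℤ)),((0:ℤ),(-2:ℤ))) = x+e*y-2*e*z := by
  simp [f, lin, phiv, phi, e, map_ofNat]; try ring
lemma hf17 : f (((1:ℤ),(0:ℤ)),((0:ℤ),(-1:ℤ)),((0:ℤ),(2:ℤ))) = x-e*y+2*e*z := by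
  simp [f, lin, phiv, phi, e, map_ofNat]; try ring
lemma hf18 : f (((1:ℤ),(0:ℤ)),((0:ℤ),(-1:ℤ)),((0:ℤ),(-2:ℤ))) = x-e*y-2*e*z := by
  simp [f, lin, phiv, phi, e, map_ofNat]; try ring
lemma hf19 : f (((0:ℤ),(1:ℤ)),((1:ℤ),(0:ℤ)),((1:ℤ),(0:ℤ))) = e*x+y+z := by
  simp [f, lin, phiv, phi, e, map_ofNat]; try ring
lemma hf20 : f (((0:ℤ),(1:ℤ)),((1:ℤ),(0:ℤ)),((-1:ℤ),(0:ℤ))) = e*x+y-z := by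
  simp [f, lin, phiv, phi, e, map_ofNat]; try ring
lemma hf21 : f (((0:ℤ),(1:ℤ)),((-1:ℤ),(0:ℤ)),((1:ℤ),(0:ℤ))) = e*x-y+z := by
  simp [f, lin, phiv, phi, e, map_ofNat]; try ring
lemma hf22 : f (((0:ℤ),(1:ℤ)),((-1:ℤ),(0:ℤ)),((-1:ℤ),(0:ℤ))) = e*x-y-z := by
  simp [f, lin, phiv, phi, e, map_ofNat]; try ring
lemma hf23 : f (((0:ℤ),(0:ℤ)),((2:ℤ),(0:ℤ)),((1:ℤ),(0:ℤ))) = 2*y+z := by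
  simp [f, lin, phiv, phi, e, map_ofNat]; try ring
lemma hf24 : f (((0:ℤ),(0:ℤ)),((2:ℤ),(0:ℤ)),((-1:ℤ),(0:ℤ))) = 2*y-z := by
  simp [f, lin, phiv, phi, e, map_ofNat]; try ring
lemma hf25 : f (((1:ℤ),(0:ℤ)),((0:ℤ),(1:ℤ)),((0:ℤ),(3:ℤ))) = x+e*y+3*e*z := by
  simp [f, lin, phiv, phi, e, map_ofNat]; try ring
lemma hf26 : f (((1:ℤ),(0:ℤ)),((0:ℤ),(1:ℤ)),((0:ℤ),(-3:ℤ))) = x+e*y-3*e*z := by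
  simp [f, lin, phiv, phi, e, map_ofNat]; try ring
lemma hf27 : f (((1:ℤ),(0:ℤ)),((0:ℤ),(-1:ℤ)),((0:ℤ),(3:ℤ))) = x-e*y+3*e*z := by
  simp [f, lin, phiv, phi, e, map_ofNat]; try ring
lemma hf28 : f (((1:ℤ),(0:ℤ)),((0:ℤ),(-1:ℤ)),((0:ℤ),(-3:ℤ))) = x-e*y-3*e*z := by
  simp [f, lin, phiv, phi, e, map_ofNat]; try ring
lemma hf29 : f (((2:ℤ),(0:ℤ)),((0:ℤ),(0:ℤ)),((0:ℤ),(3:ℤ))) = 2*x+3*e*z := by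
  simp [f, lin, phiv, phi, e, map_ofNat]; try ring
lemma hf30 : f (((2:ℤ),(0:ℤ)),((0:ℤ),(0:ℤ)),((0:ℤ),(-3:ℤ))) = 2*x-3*e*z := by
  simp [f, lin, phiv, phi, e, map_ofNat]; try ring

lemma hA : A312 = Ldat.toFinset.image f := by
  have himg : Ldat.toFinset.image f = (Ldat.map f).toFinset := by
    ext ℓ; simp
  rw [himg]
  show A312 = _
  simp only [Ldat, List.map_cons, List.map_nil, List.toFinset_cons, List.toFinset_nil,
    insert_empty_eq]
  rw [hf0, hf1, hf2, hf3, hf4, hf5, hf6, hf7, hf8, hf9, hf10, hf11, hf12, hf13, hf14,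
    hf15, hf16, hf17, hf18, hf19, hf20, hf21, hf22, hf23, hf24, hf25, hf26, hf27, hf28,
    hf29, hf30]
  rfl

def Pt (p : KV) : Projectivization ℝ (Fin 3 → ℝ) :=
  if h : phiv p ≠ 0 then Projectivization.mk ℝ (phiv p) h
  else Projectivization.mk ℝ ![1,0,0]
    (by intro hc; have := congrFun hc 0; norm_num at this)

lemma Pt_eq {p : KV} (h : phiv p ≠ 0) : Pt p = Projectivization.mk ℝ (phiv p) h :=
  dif_pos h

lemma VSet_eq (p : KV) (hp : phiv p ≠ 0) :
    {ℓ : S | ℓ ∈ A312 ∧ Vanish ℓ (Projectivization.mk ℝ (phiv p) hp)}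
      = ↑((Ldat.toFinset.filter (fun v => kdot v p = (0,0))).image f) := by
  ext ℓ
  simp only [hA, Set.mem_setOf_eq, Finset.coe_image, Set.mem_image, Finset.mem_coe,
    Finset.mem_filter, Finset.mem_image, List.mem_toFinset]
  constructor
  · rintro ⟨⟨v, hv, rfl⟩, hvan⟩
    refine ⟨v, ⟨hv, ?_⟩, rfl⟩
    have hd := (vanish_iff (phiv v) (phiv p) hp).1 hvan
    rw [dotR_phi] at hd
    exact phi_inj (by rw [hd, phi_zero])
  · rintro ⟨v, ⟨hv, hk⟩, rfl⟩
    refine ⟨⟨v, hv, rfl⟩, ?_⟩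
    rw [show f v = lin (phiv v) from rfl, vanish_iff (phiv v) (phiv p) hp, dotR_phi, hk,
      phi_zero]

lemma ncard_at (p : KV) (hp : phiv p ≠ 0) :
    {ℓ : S | ℓ ∈ A312 ∧ Vanish ℓ (Projectivization.mk ℝ (phiv p) hp)}.ncard = mK p := by
  rw [VSet_eq p hp, Set.ncard_coe_finset, Finset.card_image_of_injective _ f_inj, mK]

lemma Ldat_len : Ldat.length = 31 := by rfl

lemma pair_step {i j : ℕ} (hi : i < 31) (hj : j < 31) (hij : i < j)
    {w : Fin 3 → ℝ} (hw : w ≠ 0)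
    (h1 : dotR (phiv (Ldat.getD i kv0)) w = 0)
    (h2 : dotR (phiv (Ldat.getD j kv0)) w = 0) :
    ∃ p ∈ Pts, ∃ t : ℝ, t ≠ 0 ∧ w = t • phiv p := by
  obtain ⟨hc, hr, hcc⟩ := dec2 i (List.mem_range.2 hi) j (List.mem_range.2 hj) hij
  set a := Ldat.getD i kv0 with ha
  set b := Ldat.getD j kv0 with hb
  set r := (tbl.getD i []).getD (j-i-1) 0 with hrdef
  set p := Pts.getD r kv0 with hpdef
  have hpmem : p ∈ Pts := by
    rw [hpdef, List.getD_eq_getElem _ _ hr]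
    exact List.getElem_mem hr
  have hpne : phiv p ≠ 0 := phiv_ne_zero (dec3 p hpmem)
  have hcne : phiv (kcross a b) ≠ 0 := phiv_ne_zero hc
  have h3 : crossR w (crossR (phiv a) (phiv b)) = 0 := triple_cross h1 h2
  rw [crossR_phi] at h3
  obtain ⟨t, ht⟩ := prop_of_cross_zero hcne h3
  have h4 : crossR (phiv (kcross a b)) (phiv p) = 0 := by
    rw [crossR_phi, hcc, phiv_zero]
  obtain ⟨s, hs⟩ := prop_of_cross_zero hpne h4
  have hw' : w = (t * s) • phiv p := by rw [ht, hs, smul_smul]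
  refine ⟨p, hpmem, t * s, ?_, hw'⟩
  intro h0
  exact hw (by rw [hw', h0, zero_smul])

lemma classify {Q : Projectivization ℝ (Fin 3 → ℝ)}
    (h2 : 2 ≤ {ℓ : S | ℓ ∈ A312 ∧ Vanish ℓ Q}.ncard) :
    ∃ p ∈ Pts, Q = Pt p := by
  have hfin : {ℓ : S | ℓ ∈ A312 ∧ Vanish ℓ Q}.Finite :=
    Set.Finite.subset A312.finite_toSet (fun ℓ h => h.1)
  obtain ⟨ℓ₁, ℓ₂, h₁, h₂, hne⟩ := (Set.one_lt_ncard_iff hfin).1 (by omega)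
  obtain ⟨v₁, hv₁, rfl⟩ : ∃ v ∈ Ldat, f v = ℓ₁ := by
    have := h₁.1; rw [hA] at this
    simpa using this
  obtain ⟨v₂, hv₂, rfl⟩ : ∃ v ∈ Ldat, f v = ℓ₂ := by
    have := h₂.1; rw [hA] at this
    simpa using this
  have hvne : v₁ ≠ v₂ := fun hh => hne (by rw [hh])
  obtain ⟨n₁, hn₁⟩ := List.mem_iff_get.1 hv₁
  obtain ⟨n₂, hn₂⟩ := List.mem_iff_get.1 hv₂
  have hl₁ : Ldat.getD n₁.1 kv0 = v₁ := by
    rw [List.getD_eq_getElem _ _ n₁.2]; exact hn₁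
  have hl₂ : Ldat.getD n₂.1 kv0 = v₂ := by
    rw [List.getD_eq_getElem _ _ n₂.2]; exact hn₂
  have hd₁ : dotR (phiv v₁) Q.rep = 0 := by
    have := h₁.2 Q.rep Q.rep_nonzero (Projectivization.mk_rep Q)
    rwa [show f v₁ = lin (phiv v₁) from rfl, lin_eval] at this
  have hd₂ : dotR (phiv v₂) Q.rep = 0 := by
    have := h₂.2 Q.rep Q.rep_nonzero (Projectivization.mk_rep Q)
    rwa [show f v₂ = lin (phiv v₂) from rfl, lin_eval] at this
  have hi : n₁.1 < 31 := Ldat_len ▸ n₁.2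
  have hj : n₂.1 < 31 := Ldat_len ▸ n₂.2
  have hij : n₁.1 ≠ n₂.1 := by
    intro hh
    apply hvne
    rw [← hn₁, ← hn₂]
    congr 1
    exact Fin.ext hh
  have key : ∃ p ∈ Pts, ∃ t : ℝ, t ≠ 0 ∧ Q.rep = t • phiv p := by
    rcases Nat.lt_or_ge n₁.1 n₂.1 with hlt | hge
    · exact pair_step hi hj hlt Q.rep_nonzero (by rw [hl₁]; exact hd₁)
        (by rw [hl₂]; exact hd₂)
    · have hlt : n₂.1 < n₁.1 := lt_of_le_of_ne hge (Ne.symm hij)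
      exact pair_step hj hi hlt Q.rep_nonzero (by rw [hl₂]; exact hd₂)
        (by rw [hl₁]; exact hd₁)
  obtain ⟨p, hp, t, ht, hQw⟩ := key
  have hpne : phiv p ≠ 0 := phiv_ne_zero (dec3 p hp)
  refine ⟨p, hp, ?_⟩
  rw [Pt_eq hpne, ← Projectivization.mk_rep Q, Projectivization.mk_eq_mk_iff]
  exact ⟨Units.mk0 t ht, by rw [Units.smul_def, Units.val_mk0, ← hQw]⟩

noncomputable local instance : DecidableEq (Projectivization ℝ (Fin 3 → ℝ)) :=
  Classical.decEq _

lemma master (k : ℕ) (hk : 2 ≤ k) :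
    tk A312 k = (Pts.toFinset.filter (fun p => mK p = k)).card := by
  have hset : {Q : Projectivization ℝ (Fin 3 → ℝ) |
      {ℓ : S | ℓ ∈ A312 ∧ Vanish ℓ Q}.ncard = k}
      = ↑((Pts.toFinset.filter (fun p => mK p = k)).image Pt) := by
    ext Q
    simp only [Set.mem_setOf_eq, Finset.coe_image, Set.mem_image, Finset.mem_coe,
      Finset.mem_filter, List.mem_toFinset]
    constructor
    · intro hQ
      obtain ⟨p, hp, rfl⟩ := classify (by rw [hQ]; exact hk)
      have hpne := phiv_ne_zero (dec3 p hp)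
      rw [Pt_eq hpne, ncard_at p hpne] at hQ
      exact ⟨p, ⟨hp, hQ⟩, rfl⟩
    · rintro ⟨p, ⟨hp, hmp⟩, rfl⟩
      have hpne := phiv_ne_zero (dec3 p hp)
      rw [Pt_eq hpne, ncard_at p hpne]
      exact hmp
  unfold tk
  rw [hset, Set.ncard_coe_finset]
  apply Finset.card_image_of_injOn
  intro p hp q hq hPt
  simp only [Finset.coe_filter, Set.mem_setOf_eq, List.mem_toFinset] at hp hq
  have hpne := phiv_ne_zero (dec3 p hp.1)
  have hqne := phiv_ne_zero (dec3 q hq.1)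
  rw [Pt_eq hpne, Pt_eq hqne, Projectivization.mk_eq_mk_iff] at hPt
  obtain ⟨u, hu⟩ := hPt
  have hz : crossR (phiv p) (phiv q) = 0 := by
    rw [← hu, Units.smul_def]
    exact cross_smul_self _ _
  rw [crossR_phi] at hz
  have hkq : kcross p q = kv0 := phiv_inj (hz.trans phiv_zero.symm)
  by_contra hne
  exact dec4 p hp.1 q hq.1 hne hkq

end Arrangement

theorem stmt_5 :
    A312.card = 31 ∧
    tk A312 2 = 54 ∧ tk A312 3 = 42 ∧ tk A312 4 = 21 ∧
    tk A312 5 = 6 ∧ tk A312 6 = 1 ∧ tk A312 8 = 3 ∧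
    ∀ k : ℕ, 2 ≤ k → k ∉ ({2, 3, 4, 5, 6, 8} : Set ℕ) → tk A312 k = 0 := by
  have hcard : A312.card = 31 := by
    rw [hA, Finset.card_image_of_injective _ f_inj, dec1]
  refine ⟨hcard, ?_, ?_, ?_, ?_, ?_, ?_, ?_⟩
  · rw [master 2 (by norm_num), decc2]
  · rw [master 3 (by norm_num), decc3]
  · rw [master 4 (by norm_num), decc4]
  · rw [master 5 (by norm_num), decc5]
  · rw [master 6 (by norm_num), decc6]
  · rw [master 8 (by norm_num), decc8]
  · intro k hk2 hkn
    rw [master k hk2, Finset.card_eq_zero, Finset.filter_eq_empty_iff]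
    intro p hp hmk
    apply hkn
    rw [← hmk]
    rcases dec5 p (List.mem_toFinset.1 hp) with h|h|h|h|h|h <;> rw [h] <;>
      simp [Set.mem_insert_iff]
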